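/- Let Θ ∈ ℝ, let y, z ∈ E with y ∈ C, and set w̄ = P_C(y + Θ·(y − z)). Suppose x⁺ ∈ E is an ε-inexact proximal-gradient step from w̄ with step size β > 0 satisfying the majorization condition at (x⁺, w̄). Then 2β·(f(y) − f(x⁺)) ≥ ‖x⁺ − y‖² − Θ²·‖y − z‖² − ε². -/

import Mathlib

open RealInnerProductSpace

/-- Gradient inequality for a convex differentiable function. -/
lemma convex_grad_ineq {E : Type*} [NormedAddCommGroup E] [InnerProductSpace ℝ E]
    [FiniteDimensional ℝ E] (L : E → ℝ) (hLconv : ConvexOn ℝ Set.univ L)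
    (g w y : E) (h : HasGradientAt L g w) :
    L w + ⟪y - w, g⟫ ≤ L y := by
  set φ : ℝ → ℝ := fun t => L (w + t • (y - w)) with hφdef
  have hφconv : ConvexOn ℝ Set.univ φ := by
    have h0 := hLconv.comp_affineMap (AffineMap.lineMap w y)
    have heq : (L ∘ ⇑(AffineMap.lineMap w y)) = φ := by
      funext t; simp [hφdef, AffineMap.lineMap_apply, add_comm]
    rwa [Set.preimage_univ, heq] at h0
  have hderiv : HasDerivAt φ ⟪g, y - w⟫ 0 := by
    have hψ : HasDerivAt (fun t : ℝ => w + t • (y - w)) (y - w) 0 := by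
      simpa using ((hasDerivAt_id (0:ℝ)).smul_const (y - w)).const_add w
    have h' : HasFDerivAt L ((InnerProductSpace.toDual ℝ E) g) (w + (0:ℝ) • (y - w)) := by
      simpa using h.hasFDerivAt
    have := h'.comp_hasDerivAt 0 hψ
    simp only [InnerProductSpace.toDual_apply_apply] at this
    exact this
  have hslope := hφconv.le_slope_of_hasDerivAt (Set.mem_univ (0:ℝ)) (Set.mem_univ (1:ℝ))
    one_pos hderiv
  have : slope φ 0 1 = L y - L w := by
    simp [slope_def_field, hφdef]
  rw [this] at hslope
  rw [real_inner_comm] at hslope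
  linarith

/-- The projection inequality: the obtuse-angle property. -/
lemma proj_inner_nonpos {E : Type*} [NormedAddCommGroup E] [InnerProductSpace ℝ E]
    (C : Set E) (hCconv : Convex ℝ C) (v w y : E) (hw : w ∈ C) (hy : y ∈ C)
    (hmin : ∀ c ∈ C, ‖v - w‖ ≤ ‖v - c‖) :
    ⟪v - w, y - w⟫ ≤ 0 := by
  set a : ℝ := ⟪v - w, y - w⟫
  set B : ℝ := ‖y - w‖ ^ 2 with hB
  have key : ∀ t : ℝ, 0 ≤ t → t ≤ 1 → 2 * t * a ≤ t ^ 2 * B := by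
    intro t ht0 ht1
    have hc : w + t • (y - w) ∈ C := by
      have := hCconv hw hy (a := 1 - t) (b := t) (by linarith) ht0 (by ring)
      convert this using 1
      rw [smul_sub]
      module
    have h1 : ‖v - w‖ ≤ ‖v - (w + t • (y - w))‖ := hmin _ hc
    have h2 : ‖v - w‖ ^ 2 ≤ ‖(v - w) - t • (y - w)‖ ^ 2 := by
      have : v - (w + t • (y - w)) = (v - w) - t • (y - w) := by abel
      rw [← this]
      exact pow_le_pow_left₀ (norm_nonneg _) h1 2
    have h3 : ‖(v - w) - t • (y - w)‖ ^ 2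
        = ‖v - w‖ ^ 2 - 2 * t * a + t ^ 2 * B := by
      rw [norm_sub_sq_real, real_inner_smul_right, norm_smul]
      simp only [Real.norm_eq_abs]
      rw [mul_pow, sq_abs]
      ring
    rw [h3] at h2
    linarith
  have hB0 : 0 ≤ B := sq_nonneg _
  by_contra hpos
  push_neg at hpos
  rcases eq_or_lt_of_le hB0 with hB0' | hB0'
  · have := key 1 zero_le_one le_rfl
    rw [← hB0'] at this
    linarith
  · have ht := key (min 1 (a / B)) (le_min zero_le_one (le_of_lt (div_pos hpos hB0')))
      (min_le_left _ _)
    set t := min 1 (a / B) with htdef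
    have ht0 : 0 < t := lt_min one_pos (div_pos hpos hB0')
    have htB : t * B ≤ a := by
      have : t ≤ a / B := min_le_right _ _
      calc t * B ≤ (a / B) * B := by nlinarith
        _ = a := by field_simp
    nlinarith

/-- If `w̄ = P_C(y + Θ(y − z))` with `y ∈ C` and `x⁺` is an `ε`-inexact
proximal-gradient step from `w̄` with step size `β > 0` satisfying the majorization
condition at `(x⁺, w̄)`, then `2β (f(y) − f(x⁺)) ≥ ‖x⁺ − y‖² − Θ²‖y − z‖² − ε²`. -/
theorem pnpg_descent_from_projection {E : Type*} [NormedAddCommGroup E]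
    [InnerProductSpace ℝ E] [FiniteDimensional ℝ E]
    (L R f : E → ℝ) (gradL : E → E)
    (hLconv : ConvexOn ℝ Set.univ L)
    (hLgrad : ∀ x, HasGradientAt L (gradL x) x)
    (hRconv : ConvexOn ℝ Set.univ R)
    (hf : ∀ x, f x = L x + R x)
    (C : Set E) (hCne : C.Nonempty) (hCcl : IsClosed C) (hCconv : Convex ℝ C)
    (P : E → E) (hPmem : ∀ v, P v ∈ C)
    (hPproj : ∀ v, ∀ c ∈ C, ‖v - P v‖ ≤ ‖v - c‖)
    (Θ : ℝ) (y z : E) (hy : y ∈ C)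
    (wbar : E) (hwbar : wbar = P (y + Θ • (y - z)))
    (xplus : E) (β ε : ℝ) (hβ : 0 < β) (hε : 0 ≤ ε)
    (hprox : ∀ v, R v ≥ R xplus +
      ⟪v - xplus, β⁻¹ • (wbar - β • gradL wbar - xplus)⟫ - ε ^ 2 / (2 * β))
    (hmaj : L xplus ≤ L wbar + ⟪xplus - wbar, gradL wbar⟫ + ‖xplus - wbar‖ ^ 2 / (2 * β)) :
    2 * β * (f y - f xplus) ≥ ‖xplus - y‖ ^ 2 - Θ ^ 2 * ‖y - z‖ ^ 2 - ε ^ 2 := by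
  set g := gradL wbar
  set A : ℝ := ⟪y - xplus, wbar - xplus⟫ with hA
  set G : ℝ := ⟪y - xplus, g⟫ with hG
  -- step 1: projection bound ‖y - wbar‖² ≤ Θ² ‖y - z‖²
  set v := y + Θ • (y - z) with hv
  have hwC : wbar ∈ C := hwbar ▸ hPmem v
  have hproj : ⟪v - wbar, y - wbar⟫ ≤ 0 := by
    apply proj_inner_nonpos C hCconv v wbar y hwC hy
    intro c hc
    rw [hwbar]
    exact hPproj v c hc
  have hyw : ‖y - wbar‖ ^ 2 ≤ Θ ^ 2 * ‖y - z‖ ^ 2 := by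
    have h1 : ‖y - wbar‖ ^ 2 = ⟪y - v, y - wbar⟫ + ⟪v - wbar, y - wbar⟫ := by
      rw [← inner_add_left]
      have : (y - v) + (v - wbar) = y - wbar := by abel
      rw [this, real_inner_self_eq_norm_sq]
    have h2 : ⟪y - v, y - wbar⟫ ≤ ‖y - v‖ * ‖y - wbar‖ := real_inner_le_norm _ _
    have h3 : ‖y - v‖ = |Θ| * ‖y - z‖ := by
      have : y - v = -(Θ • (y - z)) := by rw [hv]; abel
      rw [this, norm_neg, norm_smul, Real.norm_eq_abs]
    have h4 : ‖y - wbar‖ ≤ |Θ| * ‖y - z‖ := by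
      rcases eq_or_lt_of_le (norm_nonneg (y - wbar)) with h0 | h0
      · rw [← h0]; positivity
      · have : ‖y - wbar‖ ^ 2 ≤ |Θ| * ‖y - z‖ * ‖y - wbar‖ := by
          rw [h1] at *
          calc ⟪y - v, y - wbar⟫ + ⟪v - wbar, y - wbar⟫
              ≤ ⟪y - v, y - wbar⟫ := by linarith
            _ ≤ ‖y - v‖ * ‖y - wbar‖ := h2
            _ = |Θ| * ‖y - z‖ * ‖y - wbar‖ := by rw [h3]
        nlinarith
    calc ‖y - wbar‖ ^ 2 ≤ (|Θ| * ‖y - z‖) ^ 2 :=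
          pow_le_pow_left₀ (norm_nonneg _) h4 2
      _ = Θ ^ 2 * ‖y - z‖ ^ 2 := by rw [mul_pow, sq_abs]
  -- step 2: R bound
  have hR : R y - R xplus ≥ β⁻¹ * A - G - ε ^ 2 / (2 * β) := by
    have := hprox y
    have hinner : ⟪y - xplus, β⁻¹ • (wbar - β • g - xplus)⟫ = β⁻¹ * (A - β * G) := by
      rw [real_inner_smul_right]
      congr 1
      rw [hA, hG]
      have : wbar - β • g - xplus = (wbar - xplus) - β • g := by abel
      rw [this, inner_sub_right, real_inner_smul_right]
    rw [hinner] at this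
    have hβ' : β⁻¹ * (A - β * G) = β⁻¹ * A - G := by
      field_simp
    linarith [this, hβ'.symm.le]
  -- step 3: L bound
  have hgrad : L wbar + ⟪y - wbar, g⟫ ≤ L y := convex_grad_ineq L hLconv g wbar y (hLgrad wbar)
  have hkey2 : ⟪y - wbar, g⟫ - ⟪xplus - wbar, g⟫ = G := by
    rw [hG, ← inner_sub_left]
    congr 1
    abel
  have hL : L y - L xplus ≥ G - ‖xplus - wbar‖ ^ 2 / (2 * β) := by
    have := hmaj
    linarith [hgrad, hkey2]
  -- step 4: combine
  have hsum : f y - f xplus ≥ β⁻¹ * A - ‖xplus - wbar‖ ^ 2 / (2 * β) - ε ^ 2 / (2 * β) := by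
    rw [hf y, hf xplus]
    linarith
  have hmul : 2 * β * (f y - f xplus) ≥ 2 * A - ‖xplus - wbar‖ ^ 2 - ε ^ 2 := by
    have h2β : (0:ℝ) < 2 * β := by linarith
    have := mul_le_mul_of_nonneg_left hsum (le_of_lt h2β)
    have heq : 2 * β * (β⁻¹ * A - ‖xplus - wbar‖ ^ 2 / (2 * β) - ε ^ 2 / (2 * β))
        = 2 * A - ‖xplus - wbar‖ ^ 2 - ε ^ 2 := by
      field_simp
    rw [heq] at this
    linarith
  -- step 5: norm identity
  have hkey3 : ‖y - wbar‖ ^ 2 = ‖xplus - y‖ ^ 2 - 2 * A + ‖xplus - wbar‖ ^ 2 := by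
    have h1 : y - wbar = (y - xplus) - (wbar - xplus) := by abel
    rw [h1, norm_sub_sq_real, ← hA]
    rw [norm_sub_rev y xplus, norm_sub_rev wbar xplus]
  linarith [hyw, hmul, hkey3]
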